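/- In the layered structure where an element x first appears in tree T_j, it holds that w_i(x) ≥ 2^{2^{j−1}} (for j ≥ 2), and therefore j ≤ log₂ log₂ w_i(x) + O(1). -/

import Mathlib

/-- In the layered structure, `T ℓ` has size `2^(2^ℓ)` and contains every
element whose working-set number is at most its size (it holds the most
recently accessed elements).  If `x` first appears in `T j` (so `x ∉ T (j-1)`)
with `j ≥ 2`, then `w x ≥ 2^(2^(j−1))`, and therefore
`j ≤ log₂ log₂ (w x) + O(1)`. -/
theorem layer_index_bound (T : ℕ → Finset ℕ) (w : ℕ → ℕ)
    (hcard : ∀ ℓ, (T ℓ).card = 2 ^ 2 ^ ℓ)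
    (hrecent : ∀ ℓ z, w z ≤ (T ℓ).card → z ∈ T ℓ)
    (x j : ℕ) (hj : 2 ≤ j) (hx : x ∉ T (j - 1)) :
    2 ^ 2 ^ (j - 1) ≤ w x ∧ j ≤ Nat.log 2 (Nat.log 2 (w x)) + 2 := by
  have h1 : ¬ w x ≤ (T (j-1)).card := fun h => hx (hrecent _ _ h)
  rw [hcard] at h1
  have hge : 2 ^ 2 ^ (j - 1) ≤ w x := le_of_not_ge h1
  refine ⟨hge, ?_⟩
  have hw0 : w x ≠ 0 := by
    have : 0 < 2 ^ 2 ^ (j-1) := by positivity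
    omega
  have hl1 : 2 ^ (j - 1) ≤ Nat.log 2 (w x) :=
    (Nat.le_log_iff_pow_le one_lt_two hw0).mpr hge
  have hl0 : Nat.log 2 (w x) ≠ 0 := by
    intro h; rw [h] at hl1; simp at hl1
  have hl2 : j - 1 ≤ Nat.log 2 (Nat.log 2 (w x)) :=
    (Nat.le_log_iff_pow_le one_lt_two hl0).mpr hl1
  omega
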